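/- For y in a domain avoiding 0, 1, 9, the Wronskian identity W = ψ₁ψ₂' − ψ₂ψ₁' = −6πi/(y(1−y)(9−y)) for solutions of the sunrise equation transforms under x = −(y−1)(y−9)/y and ψᵢ = √y ψᵢ^{sunrise} into W_x = ψ₁ dψ₂/dx − ψ₂ dψ₁/dx = 6πi/(x√(4−x)√(16−x)), where √(4−x)√(16−x) = −(y+3)(y−3)/y. -/

import Mathlib

open Complex in
/-- The branch of the inverse of `y ↦ -(y-1)*(y-9)/y` containing `(x,y) = (0,1)`. -/
noncomputable def Ybr (x : ℝ) : ℝ := (10 - x - Real.sqrt ((4-x)*(16-x)))/2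

theorem wronskian_transformation
    (s : Set ℝ) (hs : IsOpen s) (hxs : ∀ x ∈ s, x < 0)
    (ψs₁ ψs₂ ψs₁' ψs₂' : ℝ → ℂ)
    (h1 : ∀ y ∈ Set.Ioo (0:ℝ) 1, HasDerivAt ψs₁ (ψs₁' y) y)
    (h2 : ∀ y ∈ Set.Ioo (0:ℝ) 1, HasDerivAt ψs₂ (ψs₂' y) y)
    (hW : ∀ y ∈ Set.Ioo (0:ℝ) 1,
      ψs₁ y * ψs₂' y - ψs₂ y * ψs₁' y
        = -6*Real.pi*Complex.I/((y:ℂ)*(1-y)*(9-y))) :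
    ∀ x ∈ s,
      Real.sqrt (4-x) * Real.sqrt (16-x) = -(Ybr x + 3)*(Ybr x - 3)/(Ybr x) ∧
      (Real.sqrt (Ybr x) : ℂ) * ψs₁ (Ybr x)
          * deriv (fun u => (Real.sqrt (Ybr u) : ℂ) * ψs₂ (Ybr u)) x
        - (Real.sqrt (Ybr x) : ℂ) * ψs₂ (Ybr x)
          * deriv (fun u => (Real.sqrt (Ybr u) : ℂ) * ψs₁ (Ybr u)) x
      = 6*Real.pi*Complex.I
          / ((x:ℂ) * (Real.sqrt (4-x) : ℝ) * (Real.sqrt (16-x) : ℝ)) := by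
  intro x hxmem
  have hx0 : x < 0 := hxs x hxmem
  set D : ℝ := (4-x)*(16-x) with hDdef
  have hD : 0 < D := mul_pos (by linarith) (by linarith)
  have hsD0 : 0 < Real.sqrt D := Real.sqrt_pos.mpr hD
  have hsDsq : Real.sqrt D ^ 2 = D := Real.sq_sqrt hD.le
  set y : ℝ := Ybr x with hydef
  have hsDeq : Real.sqrt D = 10 - x - 2*y := by
    rw [hydef]; unfold Ybr; ring
  -- y ∈ (0,1)
  have hy1 : y < 1 := by
    have h8 : (8 - x)^2 < D := by nlinarith
    have : 8 - x < Real.sqrt D := by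
      nlinarith [Real.sqrt_lt_sqrt (by positivity : (0:ℝ) ≤ (8-x)^2) h8,
        Real.sqrt_sq (by linarith : (0:ℝ) ≤ 8 - x)]
    linarith [hsDeq]
  have hy0 : 0 < y := by
    have h10 : D < (10 - x)^2 := by nlinarith
    have : Real.sqrt D < 10 - x := by
      nlinarith [Real.sqrt_lt_sqrt hD.le h10, Real.sqrt_sq (by linarith : (0:ℝ) ≤ 10 - x)]
    linarith [hsDeq]
  have hymem : y ∈ Set.Ioo (0:ℝ) 1 := ⟨hy0, hy1⟩
  -- key algebraic relation
  have haux : y^2 + x*y - 10*y + 9 = 0 := by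
    have : (10 - x - 2*y)^2 = D := by rw [← hsDeq]; exact hsDsq
    nlinarith [this]
  have h9y2 : 0 < 9 - y^2 := by nlinarith
  have hsqrtmul : Real.sqrt (4-x) * Real.sqrt (16-x) = Real.sqrt D := by
    rw [hDdef, Real.sqrt_mul (by linarith : (0:ℝ) ≤ 4 - x)]
  have hsD_y : Real.sqrt D = (9 - y^2)/y := by
    rw [hsDeq]; field_simp; nlinarith [haux]
  have goal1 : Real.sqrt (4-x) * Real.sqrt (16-x) = -(y + 3)*(y - 3)/y := by
    rw [hsqrtmul, hsD_y]; ring_nf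
  refine ⟨goal1, ?_⟩
  -- derivative of Ybr
  have hDderiv : HasDerivAt (fun u : ℝ => (4-u)*(16-u)) (2*x-20) x := by
    have h := ((hasDerivAt_const x (4:ℝ)).sub (hasDerivAt_id x)).mul
      ((hasDerivAt_const x (16:ℝ)).sub (hasDerivAt_id x))
    refine h.congr_deriv ?_; simp only [Pi.sub_apply, id_eq]; ring
  have hsqrtDderiv : HasDerivAt (fun u : ℝ => Real.sqrt ((4-u)*(16-u)))
      (1 / (2 * Real.sqrt D) * (2*x-20)) x :=
    (Real.hasDerivAt_sqrt hD.ne').comp x hDderiv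
  set y' : ℝ := y^2/(9-y^2) with hy'def
  have hYbr : HasDerivAt Ybr y' x := by
    have h := (((hasDerivAt_const x (10:ℝ)).sub (hasDerivAt_id x)).sub hsqrtDderiv).div_const 2
    have heq : (10 - x - Real.sqrt ((4-x)*(16-x)))/2 = Ybr x := rfl
    have : ((0:ℝ) - 1 - 1 / (2 * Real.sqrt D) * (2*x-20)) / 2 = y' := by
      rw [hy'def, hsD_y]
      have hx10 : 10 - x = 2*y + (9 - y^2)/y := by
        field_simp; nlinarith [haux]
      field_simp
      nlinarith [haux, hy0]
    rw [← this]
    exact h.congr_of_eventuallyEq (by filter_upwards with u; rfl)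
  -- complex derivatives
  have hsy : HasDerivAt (fun u => Real.sqrt (Ybr u)) (1/(2*Real.sqrt y) * y') x :=
    (Real.hasDerivAt_sqrt hy0.ne').comp x hYbr
  have hsyC : HasDerivAt (fun u => ((Real.sqrt (Ybr u) : ℝ) : ℂ))
      ((1/(2*Real.sqrt y) * y' : ℝ) : ℂ) x := hsy.ofReal_comp
  have hc1 : HasDerivAt (fun u => ψs₁ (Ybr u)) (y' • ψs₁' y) x :=
    (h1 y hymem).scomp x hYbr
  have hc2 : HasDerivAt (fun u => ψs₂ (Ybr u)) (y' • ψs₂' y) x :=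
    (h2 y hymem).scomp x hYbr
  have hd2 : deriv (fun u => (Real.sqrt (Ybr u) : ℂ) * ψs₂ (Ybr u)) x
      = ((1/(2*Real.sqrt y) * y' : ℝ) : ℂ) * ψs₂ y + (Real.sqrt y : ℂ) * (y' • ψs₂' y) :=
    (hsyC.mul hc2).deriv
  have hd1 : deriv (fun u => (Real.sqrt (Ybr u) : ℂ) * ψs₁ (Ybr u)) x
      = ((1/(2*Real.sqrt y) * y' : ℝ) : ℂ) * ψs₁ y + (Real.sqrt y : ℂ) * (y' • ψs₁' y) :=
    (hsyC.mul hc1).deriv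
  rw [hd1, hd2]
  -- now pure algebra in ℂ
  have hWy := hW y hymem
  have hsqy : (Real.sqrt y : ℂ) * (Real.sqrt y : ℂ) = (y : ℂ) := by
    rw [← Complex.ofReal_mul, Real.mul_self_sqrt hy0.le]
  -- LHS simplifies to y * y' * (ψs₁ y * ψs₂' y - ψs₂ y * ψs₁' y)
  have hLHS : (Real.sqrt y : ℂ) * ψs₁ y
        * (((1/(2*Real.sqrt y) * y' : ℝ) : ℂ) * ψs₂ y + (Real.sqrt y : ℂ) * (y' • ψs₂' y))
      - (Real.sqrt y : ℂ) * ψs₂ y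
        * (((1/(2*Real.sqrt y) * y' : ℝ) : ℂ) * ψs₁ y + (Real.sqrt y : ℂ) * (y' • ψs₁' y))
      = (y : ℂ) * (y' : ℝ) * (ψs₁ y * ψs₂' y - ψs₂ y * ψs₁' y) := by
    rw [Complex.real_smul, Complex.real_smul]
    rw [← hsqy]; ring
  rw [hLHS, hWy]
  -- cast the algebraic relations to ℂ
  have hy'C : ((y' : ℝ) : ℂ) = (y:ℂ)^2 / (9 - (y:ℂ)^2) := by
    rw [hy'def]; push_cast; ring
  have hsqC : ((Real.sqrt (4-x) : ℝ) : ℂ) * ((Real.sqrt (16-x) : ℝ) : ℂ) = (9 - (y:ℂ)^2)/(y:ℂ) := by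
    rw [← Complex.ofReal_mul, hsqrtmul, hsD_y]; push_cast; ring
  have hauxC : (y:ℂ)^2 + (x:ℂ)*(y:ℂ) - 10*(y:ℂ) + 9 = 0 := by
    exact_mod_cast congrArg (Complex.ofReal) haux
  have hY0 : (y:ℂ) ≠ 0 := by exact_mod_cast hy0.ne'
  have hY1 : (1:ℂ) - (y:ℂ) ≠ 0 := by
    have : (1:ℝ) - y ≠ 0 := by linarith
    exact_mod_cast fun h => this (by exact_mod_cast h)
  have hY9 : (9:ℂ) - (y:ℂ) ≠ 0 := by
    have : (9:ℝ) - y ≠ 0 := by linarith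
    exact_mod_cast fun h => this (by exact_mod_cast h)
  have hY92 : (9:ℂ) - (y:ℂ)^2 ≠ 0 := by
    have : (9:ℝ) - y^2 ≠ 0 := h9y2.ne'
    exact_mod_cast fun h => this (by exact_mod_cast h)
  have hX0 : (x:ℂ) ≠ 0 := by exact_mod_cast hx0.ne
  have h10R : 10*y - y^2 - 9 ≠ 0 := by nlinarith
  have h10C : 10*(y:ℂ) - (y:ℂ)^2 - 9 ≠ 0 := by
    exact_mod_cast fun h => h10R (by exact_mod_cast h)
  have hXeq : (x:ℂ) = (10*(y:ℂ) - (y:ℂ)^2 - 9)/(y:ℂ) := by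
    rw [eq_div_iff hY0]; linear_combination hauxC
  rw [hy'C, mul_assoc (x:ℂ), hsqC, hXeq]
  field_simp
  ring_nf
  have h10C' : -9 + (y:ℂ)*10 - (y:ℂ)^2 ≠ 0 := by
    intro h; apply h10C; linear_combination h
  field_simp
  ring
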